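/- arXiv:2407.09375 — 2 statements merged into one kernel-verified Lean document; each statement's English description precedes it below -/
import Mathlib

section
/- Let k ≥ 3 be an integer, t ∈ ℝ, and let u : ℝ → ℝ be k-times continuously differentiable and 1-periodic. Then u′(t) = −2√2π Σ_{n=1}^∞ n·x_n^s(t), i.e. the derivative of the input signal at time t equals −2√2π times the absolutely convergent series of n-weighted HiPPO-FouT sine coefficients at time t. -/
open Real

open Complex MeasureTheory Set intervalIntegral

/-- Alternative FouT construction: if `u` is `k`-times continuously differentiable
(`k ≥ 3`) and 1-periodic, then `u'(t) = −2√2π Σ_{n=1}^∞ n·x_n^s(t)`, where the series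
`Σ n·x_n^s(t)` converges absolutely and
`x_n^s(t) = √2 ∫_{t-1}^t u(r) sin(2πn(t-r)) dr`. -/
theorem stmt_7 (k : ℕ) (hk : 3 ≤ k) (t : ℝ) (u : ℝ → ℝ)
    (hu : ContDiff ℝ k u) (hper : ∀ s : ℝ, u (s + 1) = u s) :
    Summable (fun n : ℕ =>
        |(n : ℝ) * (Real.sqrt 2 * ∫ r in (t - 1)..t, u r * Real.sin (2 * π * n * (t - r)))|) ∧
    deriv u t =
      -(2 * Real.sqrt 2 * π) *
        ∑' n : ℕ,
          (n : ℝ) * (Real.sqrt 2 * ∫ r in (t - 1)..t, u r * Real.sin (2 * π * n * (t - r))) := by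
    -- reparameterize t = s + 1
  obtain ⟨s, rfl⟩ : ∃ s, t = s + 1 := ⟨t - 1, by ring⟩
  rw [show s + 1 - 1 = s from by ring]
  have hu3 : ContDiff ℝ 3 u := hu.of_le (by exact_mod_cast hk)
  -- derivatives
  rw [show (3 : WithTop ℕ∞) = 2 + 1 from rfl, contDiff_succ_iff_deriv] at hu3
  obtain ⟨hud, -, hv2⟩ := hu3
  set v : ℝ → ℝ := deriv u with hv_def
  rw [show (2 : WithTop ℕ∞) = 1 + 1 from rfl, contDiff_succ_iff_deriv] at hv2
  obtain ⟨hvd, -, hw1⟩ := hv2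
  set w : ℝ → ℝ := deriv v with hw_def
  rw [contDiff_one_iff_deriv] at hw1
  obtain ⟨hwd, hz0⟩ := hw1
  set z : ℝ → ℝ := deriv w with hz_def
  have hdu : ∀ x, HasDerivAt u (v x) x := fun x => (hud x).hasDerivAt
  have hdv : ∀ x, HasDerivAt v (w x) x := fun x => (hvd x).hasDerivAt
  have hdw : ∀ x, HasDerivAt w (z x) x := fun x => (hwd x).hasDerivAt
  have hcu : Continuous u := hud.continuous
  have hcv : Continuous v := hvd.continuous
  have hcw : Continuous w := hwd.continuous
  -- periodicity of derivatives
  have hperiv : ∀ (f : ℝ → ℝ), (∀ x, f (x + 1) = f x) → ∀ x, deriv f (x + 1) = deriv f x := by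
    intro f hf x
    conv_rhs => rw [show f = fun y => f (y + 1) from funext fun y => (hf y).symm]
    rw [deriv_comp_add_const]
  have hvp : ∀ x, v (x + 1) = v x := hperiv u hper
  have hwp : ∀ x, w (x + 1) = w x := hperiv v hvp
  have hab : s < s + 1 := lt_add_of_pos_right s one_pos
  set C : (ℝ → ℝ) → ℤ → ℂ := fun f n => fourierCoeffOn hab (fun x => (f x : ℂ)) n with hC_def
  -- integral formula
  have hC : ∀ (f : ℝ → ℝ) (n : ℤ),
      C f n = ∫ r in s..(s+1), fourier (-n) ((r : ℝ) : AddCircle (1:ℝ)) * (f r : ℂ) := by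
    intro f n
    show fourierCoeffOn hab (fun x => (f x : ℂ)) n = _
    rw [fourierCoeffOn_eq_integral]
    simp only [add_sub_cancel_left]
    norm_num [smul_eq_mul]
  -- integration by parts
  have ibp : ∀ (f f' : ℝ → ℝ), (∀ x, HasDerivAt f (f' x) x) → Continuous f' →
      f (s + 1) = f s → ∀ n : ℤ, n ≠ 0 →
      C f n = C f' n / (2 * π * Complex.I * n) := by
    intro f f' hd hc hp n hn
    show fourierCoeffOn hab (fun x => (f x : ℂ)) n = fourierCoeffOn hab (fun x => (f' x : ℂ)) n / (2 * π * Complex.I * n)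
    rw [fourierCoeffOn_of_hasDerivAt hab hn (fun x _ => (hd x).ofReal_comp)
        ((Complex.continuous_ofReal.comp hc).intervalIntegrable _ _)]
    have h0 : ((f (s+1) : ℂ) - (f s : ℂ)) = 0 := by rw [hp]; ring
    rw [h0, mul_zero, zero_sub]
    push_cast
    have hpi : (π : ℂ) ≠ 0 := Complex.ofReal_ne_zero.mpr Real.pi_ne_zero
    have hnn : (n : ℂ) ≠ 0 := Int.cast_ne_zero.mpr hn
    field_simp
    ring
  -- zeroth coefficient of v vanishes
  have hC0 : C v 0 = 0 := by
    rw [hC]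
    simp only [neg_zero, fourier_zero, one_mul]
    rw [intervalIntegral.integral_ofReal]
    rw [integral_eq_sub_of_hasDerivAt (fun x _ => hdu x) (hcv.intervalIntegrable _ _)]
    rw [hper s]
    simp
  have hvu : ∀ n : ℤ, n ≠ 0 → C v n = 2 * π * Complex.I * n * C u n := by
    intro n hn
    have hpi : (π : ℂ) ≠ 0 := Complex.ofReal_ne_zero.mpr Real.pi_ne_zero
    have hnn : (n : ℂ) ≠ 0 := Int.cast_ne_zero.mpr hn
    rw [ibp u v hdu hcv (hper s) n hn]
    field_simp
  -- bound on coefficients of z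
  obtain ⟨M, hM0, hM⟩ : ∃ M, 0 ≤ M ∧ ∀ n : ℤ, ‖C z n‖ ≤ M := by
    obtain ⟨M, hM⟩ := (isCompact_uIcc (a := s) (b := s + 1)).exists_bound_of_continuousOn
      hz0.continuousOn
    refine ⟨max M 0, le_max_right _ _, fun n => ?_⟩
    rw [hC]
    have h := intervalIntegral.norm_integral_le_of_norm_le_const (a := s) (b := s + 1)
      (C := max M 0) (f := fun r => fourier (-n) ((r : ℝ) : AddCircle (1:ℝ)) * (z r : ℂ)) ?_
    · simpa using h
    · intro x hx
      rw [norm_mul]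
      have h1 : ‖fourier (-n) ((x : ℝ) : AddCircle (1:ℝ))‖ = 1 := Circle.norm_coe _
      rw [h1, one_mul, Complex.norm_real]
      have := hM x (uIoc_subset_uIcc hx)
      rw [Real.norm_eq_abs] at this ⊢
      exact this.trans (le_max_left _ _)
  -- decay of coefficients of v
  have hdecay : ∀ n : ℤ, n ≠ 0 → ‖C v n‖ ≤ M / (2 * π) ^ 2 * |1 / (n : ℝ) ^ 2| := by
    intro n hn
    rw [ibp v w hdv hcw (hvp s) n hn, ibp w z hdw hz0 (hwp s) n hn]
    rw [norm_div, norm_div]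
    have h1 : ‖(2 * (π:ℂ) * Complex.I * (n:ℂ))‖ = 2 * π * |(n:ℝ)| := by
      simp [abs_of_pos Real.pi_pos]
    rw [h1]
    have hn' : (0:ℝ) < |(n:ℝ)| := by
      simp only [abs_pos]
      exact_mod_cast hn
    have hpi : (0:ℝ) < 2 * π := by positivity
    rw [div_div]
    rw [div_le_iff₀ (by positivity)]
    have h2 : |1 / (n : ℝ) ^ 2| = 1 / |(n:ℝ)| ^ 2 := by
      rw [abs_div, abs_one, _root_.abs_pow]
    rw [h2]
    have expand : M / (2 * π) ^ 2 * (1 / |(n:ℝ)| ^ 2) * (2 * π * |(n:ℝ)| * (2 * π * |(n:ℝ)|)) = M := by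
      field_simp
    rw [expand]
    exact hM n
  -- the periodized derivative
  haveI : Fact ((0:ℝ) < 1) := ⟨one_pos⟩
  let V : C(AddCircle (1:ℝ), ℂ) :=
    ⟨AddCircle.liftIco 1 s (fun x => (v x : ℂ)),
      AddCircle.liftIco_continuous (by rw [hvp s])
        ((Complex.continuous_ofReal.comp hcv).continuousOn)⟩
  have hVcoeff : ∀ n : ℤ, fourierCoeff (V : AddCircle (1:ℝ) → ℂ) n = C v n := by
    intro n
    show fourierCoeff (AddCircle.liftIco 1 s (fun x => (v x : ℂ))) n = _
    rw [fourierCoeff_liftIco_eq]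
  have hsummable : Summable (fun n : ℤ => fourierCoeff (V : AddCircle (1:ℝ) → ℂ) n) := by
    apply Summable.of_norm_bounded_eventually (g := fun n : ℤ => M / (2 * π) ^ 2 * |1 / (n : ℝ) ^ 2|)
    · exact (((Real.summable_one_div_int_pow (p := 2)).mpr one_lt_two).abs).mul_left _
    · have hev : ∀ᶠ n : ℤ in Filter.cofinite, n ≠ 0 := Filter.eventually_cofinite_ne 0
      exact hev.mono fun n hn => by rw [hVcoeff]; exact hdecay n hn
  have hps := has_pointwise_sum_fourier_series_of_summable hsummable (((s + 1 : ℝ)) : AddCircle (1:ℝ))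
  have hVval : V (((s + 1 : ℝ)) : AddCircle (1:ℝ)) = (v (s+1) : ℂ) := by
    rw [AddCircle.coe_add_period 1 s]
    show AddCircle.liftIco 1 s (fun x => (v x : ℂ)) _ = _
    rw [AddCircle.liftIco_coe_apply ⟨le_refl s, by linarith⟩]
    rw [hvp s]
  rw [hVval] at hps
  set x0 : AddCircle (1:ℝ) := ((s + 1 : ℝ) : AddCircle (1:ℝ)) with hx0_def
  set d : ℤ → ℂ := fun i => fourierCoeff (V : AddCircle (1:ℝ) → ℂ) i • fourier i x0 with hd_def
  have hd0 : d 0 = 0 := by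
    show fourierCoeff (V : AddCircle (1:ℝ) → ℂ) 0 • fourier 0 x0 = 0
    rw [fourier_zero, hVcoeff, hC0, zero_smul]
  have hnat : HasSum (fun n : ℕ => d (n : ℤ) + d (-(n : ℤ))) ((v (s+1) : ℂ)) := by
    have h := hps.nat_add_neg
    rwa [hd0, add_zero] at h
  -- explicit exponential formula for the fourier monomials
  have hfm : ∀ (m : ℤ) (y : ℝ), fourier m ((y : ℝ) : AddCircle (1:ℝ))
      = Complex.exp ((2 * π * m * y : ℝ) * Complex.I) := by
    intro m y
    rw [fourier_coe_apply]
    norm_num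
    congr 1
    push_cast
    ring
  -- pointwise trigonometric identity
  have hpoint : ∀ (m : ℤ) (r : ℝ),
      fourier m x0 * fourier (-m) ((r : ℝ) : AddCircle (1:ℝ))
        - fourier (-m) x0 * fourier m ((r : ℝ) : AddCircle (1:ℝ))
        = 2 * Real.sin (2 * π * m * (s + 1 - r)) * Complex.I := by
    intro m r
    have key : ∀ y : ℝ,
        fourier m ((y : ℝ) : AddCircle (1:ℝ))
          = (Real.cos (2*π*m*y) : ℂ) + (Real.sin (2*π*m*y) : ℂ) * Complex.I ∧
        fourier (-m) ((y : ℝ) : AddCircle (1:ℝ))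
          = (Real.cos (2*π*m*y) : ℂ) - (Real.sin (2*π*m*y) : ℂ) * Complex.I := by
      intro y
      constructor
      · rw [hfm, Complex.exp_mul_I, ← Complex.ofReal_cos, ← Complex.ofReal_sin]
      · rw [hfm, Complex.exp_mul_I, ← Complex.ofReal_cos, ← Complex.ofReal_sin]
        rw [show (2*π*((-m : ℤ):ℝ)*y) = -(2*π*(m:ℝ)*y) from by push_cast; ring]
        rw [Real.cos_neg, Real.sin_neg]
        push_cast
        ring
    rw [hx0_def]
    rw [(key (s+1)).1, (key r).2, (key (s+1)).2, (key r).1]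
    rw [show 2*π*(m:ℝ)*(s+1-r) = 2*π*(m:ℝ)*(s+1) - 2*π*(m:ℝ)*r from by ring, Real.sin_sub]
    push_cast
    ring
  -- integrability of the fourier-times-u integrands
  have hint : ∀ m l : ℤ, IntervalIntegrable
      (fun r : ℝ => fourier m ((r : ℝ) : AddCircle (1:ℝ)) * (u r : ℂ) * fourier l x0)
      MeasureTheory.volume s (s+1) := by
    intro m l
    apply Continuous.intervalIntegrable
    exact (((map_continuous (fourier m)).comp (AddCircle.continuous_mk' 1)).mul
      (Complex.continuous_ofReal.comp hcu)).mul continuous_const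
  -- per-term identity
  have hterm : ∀ n : ℕ, d (n : ℤ) + d (-(n : ℤ))
      = ((-(4*π) * ((n:ℝ) * ∫ r in s..(s+1), u r * Real.sin (2 * π * (n:ℝ) * (s + 1 - r))) : ℝ) : ℂ) := by
    intro n
    rcases eq_or_ne n 0 with rfl | hn0
    · simp [hd0]
    · have hnz : (n : ℤ) ≠ 0 := by exact_mod_cast hn0
      have hdn : ∀ m : ℤ, m ≠ 0 → d m = (2 * π * Complex.I * m) * (C u m * fourier m x0) := by
        intro m hm
        show fourierCoeff (V : AddCircle (1:ℝ) → ℂ) m • fourier m x0 = _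
        rw [smul_eq_mul, hVcoeff, hvu m hm]
        ring
      rw [hdn (n:ℤ) hnz, hdn (-(n:ℤ)) (neg_ne_zero.mpr hnz)]
      rw [hC u (n:ℤ), hC u (-(n:ℤ))]
      simp only [neg_neg]
      -- key integral identity
      have hII : (∫ r in s..(s+1), fourier (-(n:ℤ)) ((r : ℝ) : AddCircle (1:ℝ)) * (u r : ℂ)) * fourier (n:ℤ) x0
          - (∫ r in s..(s+1), fourier ((n:ℤ)) ((r : ℝ) : AddCircle (1:ℝ)) * (u r : ℂ)) * fourier (-(n:ℤ)) x0
          = 2 * Complex.I * ((∫ r in s..(s+1), u r * Real.sin (2 * π * (n:ℝ) * (s + 1 - r)) : ℝ) : ℂ) := by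
        rw [← intervalIntegral.integral_mul_const, ← intervalIntegral.integral_mul_const,
          ← intervalIntegral.integral_sub (hint (-(n:ℤ)) (n:ℤ)) (hint (n:ℤ) (-(n:ℤ)))]
        rw [show (2 : ℂ) * Complex.I * ((∫ r in s..(s+1), u r * Real.sin (2 * π * (n:ℝ) * (s + 1 - r)) : ℝ) : ℂ)
            = ∫ r in s..(s+1), (2 * Complex.I) * ((u r * Real.sin (2 * π * (n:ℝ) * (s + 1 - r)) : ℝ) : ℂ) from by
          rw [intervalIntegral.integral_const_mul, intervalIntegral.integral_ofReal]]
        apply intervalIntegral.integral_congr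
        intro r _
        have hp := hpoint (n:ℤ) r
        push_cast at hp ⊢
        linear_combination (u r : ℂ) * hp
      push_cast at hII ⊢
      linear_combination (2 * π * Complex.I * (n:ℂ)) * hII
        + 4 * π * (n:ℂ) * ((∫ r in s..(s+1), u r * Real.sin (2 * π * (n:ℝ) * (s + 1 - r)) : ℝ) : ℂ) * Complex.I_sq
  have hnat2 : HasSum (fun n : ℕ =>
      (-(4*π) * ((n:ℝ) * ∫ r in s..(s+1), u r * Real.sin (2 * π * (n:ℝ) * (s + 1 - r))))) (v (s+1)) := by
    rw [funext hterm] at hnat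
    exact Complex.hasSum_ofReal.mp hnat
  have hfin : HasSum (fun n : ℕ => (n:ℝ) * (Real.sqrt 2 * ∫ r in s..(s+1), u r * Real.sin (2 * π * (n:ℝ) * (s + 1 - r))))
      (v (s+1) * (Real.sqrt 2 / (-(4*π)))) := by
    have h := hnat2.mul_right (Real.sqrt 2 / (-(4*π)))
    have heq : (fun n : ℕ => (-(4*π) * ((n:ℝ) * ∫ r in s..(s+1), u r * Real.sin (2 * π * (n:ℝ) * (s + 1 - r)))) * (Real.sqrt 2 / (-(4*π))))
        = fun n : ℕ => (n:ℝ) * (Real.sqrt 2 * ∫ r in s..(s+1), u r * Real.sin (2 * π * (n:ℝ) * (s + 1 - r))) := by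
      funext n
      have hpi : π ≠ 0 := Real.pi_ne_zero
      field_simp
    rwa [heq] at h
  constructor
  · exact summable_abs_iff.mpr hfin.summable
  · rw [hfin.tsum_eq]
    have hs2 : Real.sqrt 2 * Real.sqrt 2 = 2 := Real.mul_self_sqrt (by norm_num)
    have hpi : π ≠ 0 := Real.pi_ne_zero
    field_simp
    have hs2' : Real.sqrt 2 ^ 2 = 2 := by rw [sq]; exact hs2
    linear_combination (-(2 * v (s + 1))) * hs2'
end

section
/- For every integer k ≥ 3 there exists a constant C > 0, depending only on k, such that for all real t ≥ 0, L ≥ 0, integers N ≥ 1, and every k-times continuously differentiable 1-periodic function u : ℝ → ℝ with |u^{(k)}(s)| ≤ L for all s ∈ ℝ, the integrated estimator u_N(t) := ∫_0^t u̇_N(s) ds (where u̇_N(s) := −2√2π Σ_{n=1}^{N−1} n·x_n^s(s)) satisfies |(u(t) − u(0)) − u_N(t)| ≤ C · L · t / N^{k−2}. -/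
open Real


lemma per_deriv {f : ℝ → ℝ} (hf : Function.Periodic f 1) : Function.Periodic (deriv f) 1 := by
  intro x
  have h1 : (fun y => f (y + 1)) = f := funext fun y => hf y
  calc deriv f (x + 1) = deriv (fun y => f (y + 1)) x := (deriv_comp_add_const f 1 x).symm
    _ = deriv f x := by rw [h1]

lemma ibp {g : ℝ → ℝ} (hg : ContDiff ℝ 1 g) (hp : Function.Periodic g 1) (n : ℤ) :
    ∫ x in (0:ℝ)..1, Complex.exp (-(2 * π * Complex.I * n * x)) * ((deriv g x : ℝ) : ℂ)
      = (2 * π * Complex.I * n) * ∫ x in (0:ℝ)..1, Complex.exp (-(2 * π * Complex.I * n * x)) * ((g x : ℝ) : ℂ) := by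
  set c : ℂ := -(2 * π * Complex.I * n) with hc
  have hexp : ∀ x : ℝ, HasDerivAt (fun y : ℝ => Complex.exp (c * y)) (c * Complex.exp (c * x)) x := by
    intro x
    have h1 : HasDerivAt (fun y : ℝ => (y : ℂ)) 1 x := Complex.ofRealCLM.hasDerivAt
    have h2 : HasDerivAt (fun y : ℝ => c * (y : ℂ)) c x := by simpa using h1.const_mul c
    simpa [mul_comm] using h2.cexp
  have hgd : ∀ x : ℝ, HasDerivAt (fun y : ℝ => ((g y : ℝ) : ℂ)) ((deriv g x : ℝ) : ℂ) x := by
    intro x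
    exact (((hg.differentiable one_ne_zero) x).hasDerivAt).ofReal_comp
  have key : ∀ x : ℝ, HasDerivAt (fun y : ℝ => Complex.exp (c * y) * ((g y : ℝ) : ℂ))
      (Complex.exp (c * x) * ((deriv g x : ℝ) : ℂ) + c * (Complex.exp (c * x) * ((g x : ℝ) : ℂ))) x := by
    intro x
    have := (hexp x).fun_mul (hgd x)
    refine this.congr_deriv ?_
    ring
  have hcont1 : Continuous fun x : ℝ => Complex.exp (c * x) :=
    Complex.continuous_exp.comp (continuous_const.mul Complex.continuous_ofReal)
  have hcontd : Continuous fun x : ℝ => ((deriv g x : ℝ) : ℂ) :=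
    Complex.continuous_ofReal.comp (hg.continuous_deriv le_rfl)
  have hcontg : Continuous fun x : ℝ => ((g x : ℝ) : ℂ) :=
    Complex.continuous_ofReal.comp (hg.continuous)
  have hint : IntervalIntegrable (fun x : ℝ =>
      Complex.exp (c * x) * ((deriv g x : ℝ) : ℂ) + c * (Complex.exp (c * x) * ((g x : ℝ) : ℂ)))
      MeasureTheory.volume 0 1 :=
    ((hcont1.mul hcontd).add (continuous_const.mul (hcont1.mul hcontg))).intervalIntegrable 0 1
  have hftc := intervalIntegral.integral_eq_sub_of_hasDerivAt (fun x _ => key x) hint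
  have hend : Complex.exp (c * (1:ℝ)) * ((g 1 : ℝ) : ℂ) - Complex.exp (c * (0:ℝ)) * ((g 0 : ℝ) : ℂ) = 0 := by
    have he : Complex.exp c = 1 := by
      rw [hc]
      have := Complex.exp_int_mul_two_pi_mul_I (-n)
      rw [← this]
      congr 1
      push_cast
      ring
    have hg1 : g 1 = g 0 := by simpa using (hp 0)
    rw [hg1]
    simp [he]
  rw [hend] at hftc
  have i1 : IntervalIntegrable (fun x : ℝ => Complex.exp (c * x) * ((deriv g x : ℝ) : ℂ))
      MeasureTheory.volume 0 1 := (hcont1.mul hcontd).intervalIntegrable 0 1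
  have i2 : IntervalIntegrable (fun x : ℝ => c * (Complex.exp (c * x) * ((g x : ℝ) : ℂ)))
      MeasureTheory.volume 0 1 := (continuous_const.mul (hcont1.mul hcontg)).intervalIntegrable 0 1
  have hsplit := intervalIntegral.integral_add i1 i2
  rw [hsplit] at hftc
  rw [intervalIntegral.integral_const_mul] at hftc
  have : (∫ x in (0:ℝ)..1, Complex.exp (c * x) * ((deriv g x : ℝ) : ℂ))
      = -c * ∫ x in (0:ℝ)..1, Complex.exp (c * x) * ((g x : ℝ) : ℂ) := by
    have := hftc
    linear_combination this
  have hrw : ∀ x : ℝ, c * x = -(2 * π * Complex.I * n * x) := by intro x; rw [hc]; ring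
  simp_rw [hrw] at this
  rw [this, hc]
  ring


lemma decay : ∀ (k : ℕ) (g : ℝ → ℝ), ContDiff ℝ k g → Function.Periodic g 1 →
    ∀ {L : ℝ}, (∀ s, |iteratedDeriv k g s| ≤ L) → ∀ n : ℤ,
    ‖∫ x in (0:ℝ)..1, Complex.exp (-(2 * π * Complex.I * n * x)) * ((g x : ℝ) : ℂ)‖
      * (2 * π * |(n : ℝ)|) ^ k ≤ L := by
  intro k
  induction k with
  | zero =>
    intro g hg hp L hL n
    simp only [pow_zero, mul_one]
    have : ∀ x ∈ Set.uIoc (0:ℝ) 1,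
        ‖Complex.exp (-(2 * π * Complex.I * n * x)) * ((g x : ℝ) : ℂ)‖ ≤ L := by
      intro x _
      rw [norm_mul]
      have he : ‖Complex.exp (-(2 * π * Complex.I * n * x))‖ = 1 := by
        have : -(2 * (π:ℂ) * Complex.I * n * x) = ((-(2 * π * n * x) : ℝ) : ℂ) * Complex.I := by
          push_cast; ring
        rw [this, Complex.norm_exp_ofReal_mul_I]
      rw [he, one_mul, Complex.norm_real, Real.norm_eq_abs]
      simpa [iteratedDeriv_zero] using hL x
    calc ‖∫ x in (0:ℝ)..1, Complex.exp (-(2 * π * Complex.I * n * x)) * ((g x : ℝ) : ℂ)‖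
        ≤ L * |1 - 0| := intervalIntegral.norm_integral_le_of_norm_le_const this
      _ = L := by norm_num
  | succ k ih =>
    intro g hg hp L hL n
    have hg1 : ContDiff ℝ 1 g := hg.of_le (by exact_mod_cast Nat.one_le_iff_ne_zero.mpr (Nat.succ_ne_zero k))
    have hgd : ContDiff ℝ k (deriv g) := by
      have h : ContDiff ℝ ((k : WithTop ℕ∞) + 1) g := by
        exact_mod_cast hg
      exact (contDiff_succ_iff_deriv.mp h).2.2
    have hpd : Function.Periodic (deriv g) 1 := per_deriv hp
    have hLd : ∀ s, |iteratedDeriv k (deriv g) s| ≤ L := by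
      intro s
      rw [← iteratedDeriv_succ']
      exact hL s
    have key := ih (deriv g) hgd hpd hLd n
    rw [ibp hg1 hp n] at key
    rw [norm_mul] at key
    have hnorm : ‖2 * (π:ℂ) * Complex.I * n‖ = 2 * π * |(n:ℝ)| := by
      simp [abs_of_pos Real.pi_pos, Complex.norm_intCast]
    rw [hnorm] at key
    calc ‖∫ x in (0:ℝ)..1, Complex.exp (-(2 * π * Complex.I * n * x)) * ((g x : ℝ) : ℂ)‖
          * (2 * π * |(n : ℝ)|) ^ (k+1)
        = 2 * π * |(n:ℝ)| * ‖∫ x in (0:ℝ)..1, Complex.exp (-(2 * π * Complex.I * n * x)) * ((g x : ℝ) : ℂ)‖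
          * (2 * π * |(n : ℝ)|) ^ k := by ring
      _ ≤ L := key


noncomputable def fc (g : ℝ → ℝ) (n : ℤ) : ℂ :=
  ∫ x in (0:ℝ)..1, Complex.exp (-(2 * π * Complex.I * n * x)) * ((g x : ℝ) : ℂ)

lemma fourier_pointwise {g : ℝ → ℝ} (hcg : Continuous g) (hp : Function.Periodic g 1)
    {B : ℤ → ℝ} (hB : Summable B) (hbd : ∀ n : ℤ, n ≠ 0 → ‖fc g n‖ ≤ B n) (s : ℝ) :
    HasSum (fun n : ℤ => fc g n * Complex.exp (2 * π * Complex.I * n * s)) ((g s : ℝ) : ℂ) := by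
  haveI : Fact ((0:ℝ) < 1) := ⟨one_pos⟩
  have pc : Function.Periodic (fun x : ℝ => ((g x : ℝ) : ℂ)) 1 := by
    intro x; simp [hp x]
  have contG : Continuous pc.lift :=
    (Complex.continuous_ofReal.comp hcg).quotient_liftOn' _
  set G : C(AddCircle (1:ℝ), ℂ) := ⟨pc.lift, contG⟩ with hG
  have hcoe : ∀ x : ℝ, G ((x : ℝ) : AddCircle (1:ℝ)) = ((g x : ℝ) : ℂ) := fun x => pc.lift_coe x
  have hptwise : ∀ (n : ℤ) (x : ℝ),
      (fourier (-n) ((x:ℝ) : AddCircle (1:ℝ))) • G ((x:ℝ) : AddCircle (1:ℝ))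
        = Complex.exp (-(2 * π * Complex.I * n * x)) * ((g x : ℝ) : ℂ) := by
    intro n x
    rw [fourier_coe_apply, smul_eq_mul, hcoe]
    congr 1
    push_cast
    ring_nf
  have hcoeff : ∀ n : ℤ, fourierCoeff ⇑G n = fc g n := by
    intro n
    rw [fourierCoeff_eq_intervalIntegral ⇑G n 0]
    simp only [zero_add, one_smul, one_div_one]
    unfold fc
    exact intervalIntegral.integral_congr (fun x _ => hptwise n x)
  have hsum : Summable (fourierCoeff ⇑G) := by
    apply Summable.of_norm_bounded_eventually hB
    have : {n : ℤ | ¬ ‖fourierCoeff ⇑G n‖ ≤ B n} ⊆ {0} := by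
      intro n hn
      by_contra h0
      exact hn (by rw [hcoeff]; exact hbd n (by simpa using h0))
    exact Filter.eventually_cofinite.mpr (Set.Finite.subset (Set.finite_singleton 0) this)
  have hps := has_pointwise_sum_fourier_series_of_summable hsum ((s:ℝ) : AddCircle (1:ℝ))
  have : G ((s:ℝ) : AddCircle (1:ℝ)) = ((g s : ℝ) : ℂ) := hcoe s
  rw [this] at hps
  convert hps using 2 with n
  rw [hcoeff, fourier_coe_apply, smul_eq_mul]
  congr 2
  push_cast
  ring


lemma fc_shift {g : ℝ → ℝ} (hcg : Continuous g) (hp : Function.Periodic g 1) (m : ℤ) (s : ℝ) :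
    fc g m * Complex.exp (2 * π * Complex.I * m * s)
      = ∫ v in (0:ℝ)..1, ((g (s - v) : ℝ) : ℂ) * Complex.exp (2 * π * Complex.I * m * v) := by
  set h : ℝ → ℂ := fun x => ((g x : ℝ) : ℂ) * Complex.exp (2 * π * Complex.I * m * (s - x)) with hh
  have hper : Function.Periodic h 1 := by
    intro x
    simp only [hh]
    rw [hp x]
    congr 1
    push_cast
    rw [show 2 * (π:ℂ) * Complex.I * (m:ℂ) * ((s:ℂ) - ((x:ℂ)+1)) = 2 * π * Complex.I * m * (s - x) + (-(m:ℂ)) * (2 * π * Complex.I) by ring, Complex.exp_add]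
    have : Complex.exp ((-m : ℤ) * (2 * (π:ℂ) * Complex.I)) = 1 := by
      exact_mod_cast Complex.exp_int_mul_two_pi_mul_I (-m)
    rw [show ((-m : ℂ)) * (2 * (π:ℂ) * Complex.I) = ((-m : ℤ) : ℂ) * (2 * (π:ℂ) * Complex.I) by push_cast; ring, this, mul_one]
  have step1 : fc g m * Complex.exp (2 * π * Complex.I * m * s) = ∫ x in (0:ℝ)..1, h x := by
    unfold fc
    rw [← intervalIntegral.integral_mul_const]
    apply intervalIntegral.integral_congr
    intro x _
    simp only [hh]
    rw [show Complex.exp (-(2*(π:ℂ)*Complex.I*m*x)) * ((g x : ℝ):ℂ) * Complex.exp (2*π*Complex.I*m*s)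
        = ((g x : ℝ):ℂ) * (Complex.exp (-(2*(π:ℂ)*Complex.I*m*x)) * Complex.exp (2*π*Complex.I*m*s)) by ring,
      ← Complex.exp_add]
    congr 2
    ring
  have step2 : (∫ x in (0:ℝ)..1, h x) = ∫ x in (s-1)..s, h x := by
    have := hper.intervalIntegral_add_eq 0 (s-1)
    simpa using this
  have step3 : (∫ x in (s-1)..s, h x) = ∫ v in (0:ℝ)..1, h (s - v) := by
    have := intervalIntegral.integral_comp_sub_left h s (a := 0) (b := 1)
    rw [this]
    norm_num
  rw [step1, step2, step3]
  apply intervalIntegral.integral_congr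
  intro v _
  simp only [hh]
  congr 2
  push_cast
  ring


lemma real_ibp {u : ℝ → ℝ} (hu : ContDiff ℝ 1 u) (hp : Function.Periodic u 1) (n : ℕ) (s : ℝ) :
    ∫ v in (0:ℝ)..1, deriv u (s - v) * Real.cos (2 * π * n * v)
      = -(2 * π * n) * ∫ v in (0:ℝ)..1, u (s - v) * Real.sin (2 * π * n * v) := by
  have hdu : Differentiable ℝ u := hu.differentiable one_ne_zero
  have key : ∀ v : ℝ, HasDerivAt (fun w : ℝ => u (s - w) * Real.cos (2 * π * n * w))
      (-(deriv u (s - v) * Real.cos (2 * π * n * v)) - (2 * π * n) * (u (s - v) * Real.sin (2 * π * n * v))) v := by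
    intro v
    have h1 : HasDerivAt (fun w : ℝ => u (s - w)) (-(deriv u (s - v))) v := by
      have h0 : HasDerivAt (fun w : ℝ => s - w) (-1) v := by
        simpa using ((hasDerivAt_id v).const_sub s)
      simpa [Function.comp_def] using ((hdu (s - v)).hasDerivAt).comp v h0
    have h2 : HasDerivAt (fun w : ℝ => Real.cos (2 * π * n * w)) (-(2 * π * n) * Real.sin (2 * π * n * v)) v := by
      have h0 : HasDerivAt (fun w : ℝ => 2 * π * (n:ℝ) * w) (2 * π * n) v := by
        simpa using (hasDerivAt_id v).const_mul (2 * π * (n:ℝ))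
      have := h0.cos
      convert this using 1
      ring
    have := h1.fun_mul h2
    refine this.congr_deriv ?_
    ring
  have hcont : Continuous fun v : ℝ =>
      (-(deriv u (s - v) * Real.cos (2 * π * n * v)) - (2 * π * n) * (u (s - v) * Real.sin (2 * π * n * v))) := by
    have c1 : Continuous fun v : ℝ => deriv u (s - v) :=
      (hu.continuous_deriv le_rfl).comp (continuous_const.sub continuous_id)
    have c2 : Continuous fun v : ℝ => u (s - v) := hu.continuous.comp (continuous_const.sub continuous_id)
    fun_prop
  have hftc := intervalIntegral.integral_eq_sub_of_hasDerivAt (fun v _ => key v)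
    (hcont.intervalIntegrable 0 1)
  have hend : u (s - 1) * Real.cos (2 * π * n * 1) - u (s - 0) * Real.cos (2 * π * n * 0) = 0 := by
    have h1 : u (s - 1) = u s := by
      have := hp (s - 1); simpa using this.symm
    have h2 : Real.cos (2 * π * n * 1) = 1 := by
      rw [mul_one]
      rw [show 2 * π * (n:ℝ) = (n:ℝ) * (2 * π) by ring]
      exact Real.cos_nat_mul_two_pi n
    rw [h1, h2]
    simp
  rw [hend] at hftc
  have c1 : Continuous fun v : ℝ => deriv u (s - v) * Real.cos (2 * π * n * v) :=
    (((hu.continuous_deriv le_rfl).comp (continuous_const.sub continuous_id)).mul (by fun_prop))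
  have c2 : Continuous fun v : ℝ => u (s - v) * Real.sin (2 * π * n * v) :=
    ((hu.continuous.comp (continuous_const.sub continuous_id)).mul (by fun_prop))
  have i1 : IntervalIntegrable (fun v : ℝ => -(deriv u (s - v) * Real.cos (2 * π * n * v))) MeasureTheory.volume 0 1 :=
    (c1.neg).intervalIntegrable 0 1
  have i2 : IntervalIntegrable (fun v : ℝ => (2 * π * (n:ℝ)) * (u (s - v) * Real.sin (2 * π * n * v))) MeasureTheory.volume 0 1 :=
    (continuous_const.mul c2).intervalIntegrable 0 1
  rw [intervalIntegral.integral_sub i1 i2] at hftc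
  rw [intervalIntegral.integral_neg, intervalIntegral.integral_const_mul] at hftc
  linarith [hftc]


lemma subst_sin (u : ℝ → ℝ) (n : ℕ) (s : ℝ) :
    (∫ r in (s-1)..s, u r * Real.sin (2*π*(n:ℝ)*(s-r)))
      = ∫ v in (0:ℝ)..1, u (s - v) * Real.sin (2*π*(n:ℝ)*v) := by
  have h := intervalIntegral.integral_comp_sub_left
    (fun r => u r * Real.sin (2*π*(n:ℝ)*(s-r))) s (a := 0) (b := 1)
  rw [show s - (0:ℝ) = s by ring] at h
  rw [← h]
  apply intervalIntegral.integral_congr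
  intro v _
  simp only
  congr 2
  ring

lemma pairing {u : ℝ → ℝ} (hu : ContDiff ℝ 1 u) (hp : Function.Periodic u 1) (n : ℕ) (s : ℝ) :
    fc (deriv u) (n:ℤ) * Complex.exp (2*π*Complex.I*(n:ℂ)*s)
      + fc (deriv u) (-(n:ℤ)) * Complex.exp (2*π*Complex.I*(-(n:ℂ))*s)
      = ((((n:ℝ) * (Real.sqrt 2 * ∫ r in (s-1)..s, u r * Real.sin (2*π*(n:ℝ)*(s-r))))
          * (-(2 * Real.sqrt 2 * π)) : ℝ) : ℂ) := by
  have hg : Continuous (deriv u) := hu.continuous_deriv le_rfl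
  have hpg : Function.Periodic (deriv u) 1 := per_deriv hp
  have h1 := fc_shift hg hpg (n:ℤ) s
  have h2 := fc_shift hg hpg (-(n:ℤ)) s
  push_cast at h1 h2
  rw [h1, h2]
  have c1 : Continuous fun v : ℝ => ((deriv u (s - v) : ℝ) : ℂ) * Complex.exp (2 * π * Complex.I * (n:ℂ) * v) := by
    apply Continuous.mul
    · exact Complex.continuous_ofReal.comp (hg.comp (continuous_const.sub continuous_id))
    · exact Complex.continuous_exp.comp (by fun_prop)
  have c2 : Continuous fun v : ℝ => ((deriv u (s - v) : ℝ) : ℂ) * Complex.exp (2 * π * Complex.I * (-(n:ℂ)) * v) := by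
    apply Continuous.mul
    · exact Complex.continuous_ofReal.comp (hg.comp (continuous_const.sub continuous_id))
    · exact Complex.continuous_exp.comp (by fun_prop)
  rw [← intervalIntegral.integral_add (c1.intervalIntegrable 0 1) (c2.intervalIntegrable 0 1)]
  have hpt : ∀ v : ℝ, ((deriv u (s - v) : ℝ) : ℂ) * Complex.exp (2 * π * Complex.I * (n:ℂ) * v)
      + ((deriv u (s - v) : ℝ) : ℂ) * Complex.exp (2 * π * Complex.I * (-(n:ℂ)) * v)
      = (((deriv u (s - v) * (2 * Real.cos (2*π*(n:ℝ)*v)) : ℝ)) : ℂ) := by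
    intro v
    have e1 : 2 * (π:ℂ) * Complex.I * (n:ℂ) * (v:ℂ) = ((2*π*(n:ℝ)*v : ℝ) : ℂ) * Complex.I := by
      push_cast; ring
    have e2 : 2 * (π:ℂ) * Complex.I * (-(n:ℂ)) * (v:ℂ) = (((-(2*π*(n:ℝ)*v) : ℝ)) : ℂ) * Complex.I := by
      push_cast; ring
    rw [e1, e2, Complex.exp_mul_I, Complex.exp_mul_I]
    push_cast
    rw [Complex.cos_neg, Complex.sin_neg]
    ring
  rw [intervalIntegral.integral_congr (fun v _ => hpt v)]
  rw [intervalIntegral.integral_ofReal]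
  have hreal : (∫ v in (0:ℝ)..1, deriv u (s - v) * (2 * Real.cos (2*π*(n:ℝ)*v)))
      = ((n:ℝ) * (Real.sqrt 2 * ∫ r in (s-1)..s, u r * Real.sin (2*π*(n:ℝ)*(s-r)))) * (-(2 * Real.sqrt 2 * π)) := by
    have e3 : (∫ v in (0:ℝ)..1, deriv u (s - v) * (2 * Real.cos (2*π*(n:ℝ)*v)))
        = 2 * ∫ v in (0:ℝ)..1, deriv u (s - v) * Real.cos (2*π*(n:ℝ)*v) := by
      rw [← intervalIntegral.integral_const_mul]
      apply intervalIntegral.integral_congr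
      intro v _
      ring
    rw [e3, real_ibp hu hp n s, subst_sin u n s]
    have h22 : Real.sqrt 2 * Real.sqrt 2 = 2 := Real.mul_self_sqrt (by norm_num)
    linear_combination ((2*π*(n:ℝ) * ∫ v in (0:ℝ)..1, u (s - v) * Real.sin (2*π*(n:ℝ)*v))) * h22
  rw [hreal]


lemma tail_sq {N : ℕ} (hN : 1 ≤ N) : ∑' i : ℕ, (((i + N : ℕ) : ℝ)^2)⁻¹ ≤ 2 / N := by
  have hbase : Summable (fun n : ℕ => ((n : ℝ)^2)⁻¹) :=
    Real.summable_nat_pow_inv.mpr one_lt_two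
  have hsum : Summable (fun i : ℕ => (((i + N : ℕ) : ℝ)^2)⁻¹) := by
    exact_mod_cast (summable_nat_add_iff N).mpr hbase
  apply Summable.tsum_le_of_sum_le hsum
  intro F
  set M := (F.sup id) + 1 with hM
  have hsub : F ⊆ Finset.range M := by
    intro i hi
    exact Finset.mem_range.mpr (Nat.lt_succ_of_le (Finset.le_sup (f := id) hi))
  have h1 : ∑ i ∈ F, (((i + N : ℕ) : ℝ)^2)⁻¹ ≤ ∑ i ∈ Finset.range M, (((i + N : ℕ) : ℝ)^2)⁻¹ :=
    Finset.sum_le_sum_of_subset_of_nonneg hsub (fun i _ _ => by positivity)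
  have h2 : ∑ i ∈ Finset.range M, (((i + N : ℕ) : ℝ)^2)⁻¹
      = ∑ m ∈ Finset.Ico N (N + M), (((m : ℕ) : ℝ)^2)⁻¹ := by
    rw [Finset.sum_Ico_eq_sum_range]
    simp only [Nat.add_sub_cancel_left]
    exact Finset.sum_congr rfl (fun i _ => by rw [add_comm])
  have h3 : Finset.Ico N (N + M) ⊆ Finset.Ioo (N - 1) (N + M) := by
    intro m hm
    rw [Finset.mem_Ico] at hm
    rw [Finset.mem_Ioo]
    exact ⟨by omega, hm.2⟩
  have h4 : ∑ m ∈ Finset.Ico N (N + M), (((m : ℕ) : ℝ)^2)⁻¹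
      ≤ ∑ m ∈ Finset.Ioo (N - 1) (N + M), (((m : ℕ) : ℝ)^2)⁻¹ :=
    Finset.sum_le_sum_of_subset_of_nonneg h3 (fun i _ _ => by positivity)
  have h5 : ∑ m ∈ Finset.Ioo (N - 1) (N + M), (((m : ℕ) : ℝ)^2)⁻¹ ≤ 2 / (((N - 1 : ℕ) : ℝ) + 1) := by
    have := sum_Ioo_inv_sq_le (α := ℝ) (N - 1) (N + M)
    convert this using 2 with m hm
  have h6 : ((N - 1 : ℕ) : ℝ) + 1 = (N : ℝ) := by
    have : ((N - 1 : ℕ) : ℝ) = (N : ℝ) - 1 := by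
      rw [Nat.cast_sub hN]; norm_num
    rw [this]; ring
  rw [h6] at h5
  calc ∑ i ∈ F, (((i + N : ℕ) : ℝ)^2)⁻¹ ≤ _ := h1
    _ = _ := h2
    _ ≤ _ := h4
    _ ≤ _ := h5


lemma norm_exp_one (m : ℤ) (s : ℝ) : ‖Complex.exp (2 * π * Complex.I * m * s)‖ = 1 := by
  have : 2 * (π:ℂ) * Complex.I * m * s = ((2 * π * m * s : ℝ) : ℂ) * Complex.I := by
    push_cast; ring
  rw [this, Complex.norm_exp_ofReal_mul_I]

lemma pointwise_bound {k : ℕ} (hk : 3 ≤ k) {N : ℕ} (hN : 1 ≤ N) {L : ℝ} {u : ℝ → ℝ}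
    (hu : ContDiff ℝ k u) (hp : Function.Periodic u 1)
    (hb : ∀ s, |iteratedDeriv k u s| ≤ L) (s : ℝ) :
    |deriv u s - (-(2 * Real.sqrt 2 * π) *
        ∑ n ∈ Finset.range N, (n:ℝ) * (Real.sqrt 2 * ∫ r in (s-1)..s, u r * Real.sin (2*π*(n:ℝ)*(s-r))))|
      ≤ 4 * L / (N:ℝ)^(k-2) := by
  have hL0 : 0 ≤ L := le_trans (abs_nonneg _) (hb 0)
  have hk1 : (1:ℕ) ≤ k := by omega
  have hu1 : ContDiff ℝ 1 u := hu.of_le (by exact_mod_cast hk1)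
  set g := deriv u with hg
  have hgc : Continuous g := hu.continuous_deriv (by exact_mod_cast hk1)
  have hpg : Function.Periodic g 1 := per_deriv hp
  have hgcd : ContDiff ℝ (k-1) g := by
    have h : ContDiff ℝ (((k-1:ℕ) : WithTop ℕ∞) + 1) u := by
      have : ((k-1:ℕ) : WithTop ℕ∞) + 1 = ((k:ℕ) : WithTop ℕ∞) := by
        have : (k-1) + 1 = k := by omega
        rw [← this]; push_cast; ring
      rw [this]; exact_mod_cast hu
    exact (contDiff_succ_iff_deriv.mp h).2.2
  have hbg : ∀ x, |iteratedDeriv (k-1) g x| ≤ L := by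
    intro x
    have : iteratedDeriv (k-1) g = iteratedDeriv k u := by
      have hofk : (k-1)+1 = k := by omega
      rw [hg, ← iteratedDeriv_succ', hofk]
    rw [this]
    exact hb x
  -- coefficient bound
  have hfb : ∀ n : ℤ, n ≠ 0 → ‖fc g n‖ ≤ L * ((|(n:ℝ)|) ^ (k-1))⁻¹ := by
    intro n hn
    have hd := decay (k-1) g hgcd hpg hbg n
    have hn1 : (1:ℝ) ≤ |(n:ℝ)| := by
      rw [← Int.cast_abs]
      exact_mod_cast Int.one_le_abs (by simpa using hn)
    have hpos : (0:ℝ) < |(n:ℝ)| ^ (k-1) := by positivity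
    have hge : (|(n:ℝ)|) ^ (k-1) ≤ (2 * π * |(n:ℝ)|) ^ (k-1) := by
      apply pow_le_pow_left₀ (by positivity)
      nlinarith [Real.pi_gt_three, abs_nonneg ((n:ℝ))]
    have : ‖fc g n‖ * (|(n:ℝ)|) ^ (k-1) ≤ L := by
      calc ‖fc g n‖ * (|(n:ℝ)|) ^ (k-1) ≤ ‖fc g n‖ * (2 * π * |(n:ℝ)|) ^ (k-1) := by
            exact mul_le_mul_of_nonneg_left hge (norm_nonneg _)
        _ ≤ L := hd
    rw [← div_eq_mul_inv]
    exact (le_div_iff₀ hpos).mpr this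
  -- summability majorant
  have hBsum : Summable (fun n : ℤ => L * (((n:ℝ))^2)⁻¹) := by
    have h2 : Summable (fun n : ℤ => ((n:ℝ)^2)⁻¹) := by
      have := summable_one_div_int_pow (p := 2) |>.mpr one_lt_two
      simpa [one_div] using this
    exact h2.mul_left L
  have hbd : ∀ n : ℤ, n ≠ 0 → ‖fc g n‖ ≤ L * (((n:ℝ))^2)⁻¹ := by
    intro n hn
    refine (hfb n hn).trans ?_
    apply mul_le_mul_of_nonneg_left _ hL0
    have hn1 : (1:ℝ) ≤ |(n:ℝ)| := by
      rw [← Int.cast_abs]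
      exact_mod_cast Int.one_le_abs (by simpa using hn)
    apply inv_anti₀ (by positivity)
    calc ((n:ℝ))^2 = |(n:ℝ)|^2 := (sq_abs _).symm
      _ ≤ |(n:ℝ)|^(k-1) := pow_le_pow_right₀ hn1 (by omega)
  have hS := fourier_pointwise hgc hpg hBsum hbd s
  have hw := hS.nat_add_neg
  have ha0 : fc g 0 * Complex.exp (2*π*Complex.I*((0:ℤ):ℂ)*s) = 0 := by
    have h1 : fc g 0 = ((u 1 - u 0 : ℝ) : ℂ) := by
      unfold fc
      have : ∀ x : ℝ, Complex.exp (-(2 * π * Complex.I * ((0:ℤ):ℂ) * x)) * ((g x : ℝ) : ℂ)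
          = ((g x : ℝ) : ℂ) := by
        intro x; simp
      rw [intervalIntegral.integral_congr (fun x _ => this x)]
      rw [intervalIntegral.integral_ofReal]
      congr 1
      rw [hg]
      exact intervalIntegral.integral_deriv_eq_sub
        (fun x _ => (hu1.differentiable one_ne_zero).differentiableAt)
        (hgc.intervalIntegrable 0 1)
    have h2 : u 1 = u 0 := by simpa using (hp 0)
    rw [h1, h2]
    simp
  rw [ha0, add_zero] at hw
  -- identify terms with the real expression
  set T : ℕ → ℝ := fun n =>
    ((n:ℝ) * (Real.sqrt 2 * ∫ r in (s-1)..s, u r * Real.sin (2*π*(n:ℝ)*(s-r)))) * (-(2 * Real.sqrt 2 * π)) with hT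
  have hfun : (fun n : ℕ => fc g (n:ℤ) * Complex.exp (2*π*Complex.I*(((n:ℕ):ℤ):ℂ)*s)
      + fc g (-(n:ℕ):ℤ) * Complex.exp (2*π*Complex.I*(((-(n:ℕ):ℤ)):ℂ)*s))
      = fun n : ℕ => ((T n : ℝ) : ℂ) := by
    funext n
    have hpair := pairing hu1 hp n s
    rw [hT]
    simp only [Int.cast_natCast, Int.cast_neg]
    exact hpair
  rw [hfun] at hw
  have hsummable := hw.summable
  have hsplit := Summable.sum_add_tsum_nat_add (f := fun n : ℕ => ((T n : ℝ) : ℂ)) N hsummable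
  rw [hw.tsum_eq] at hsplit
  -- tail bound
  have hwb : ∀ n : ℕ, 1 ≤ n → ‖((T n : ℝ) : ℂ)‖ ≤ 2 * L * (((n:ℝ))^(k-1))⁻¹ := by
    intro n hn
    have hne : ((n:ℤ)) ≠ 0 := by exact_mod_cast Nat.pos_iff_ne_zero.mp hn
    have hne2 : (-(n:ℤ)) ≠ 0 := by simpa using hne
    rw [← congrFun hfun n]
    have e1 := hfb (n:ℤ) hne
    have e2 := hfb (-(n:ℤ)) hne2
    have habs : |((n:ℤ):ℝ)| = (n:ℝ) := by
      rw [Int.cast_natCast]; exact abs_of_nonneg (Nat.cast_nonneg n)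
    rw [habs] at e1
    have habs2 : |(((-(n:ℤ)) : ℤ) : ℝ)| = (n:ℝ) := by
      rw [Int.cast_neg, abs_neg, Int.cast_natCast]
      exact abs_of_nonneg (Nat.cast_nonneg n)
    rw [habs2] at e2
    calc ‖fc g (n:ℤ) * Complex.exp (2*π*Complex.I*(((n:ℕ):ℤ):ℂ)*s)
        + fc g (-(n:ℕ):ℤ) * Complex.exp (2*π*Complex.I*(((-(n:ℕ):ℤ)):ℂ)*s)‖
        ≤ ‖fc g (n:ℤ) * Complex.exp (2*π*Complex.I*(((n:ℕ):ℤ):ℂ)*s)‖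
          + ‖fc g (-(n:ℕ):ℤ) * Complex.exp (2*π*Complex.I*(((-(n:ℕ):ℤ)):ℂ)*s)‖ := norm_add_le _ _
      _ = ‖fc g (n:ℤ)‖ + ‖fc g (-(n:ℤ))‖ := by
          rw [norm_mul, norm_mul, norm_exp_one, norm_exp_one, mul_one, mul_one]
      _ ≤ L * (((n:ℝ))^(k-1))⁻¹ + L * (((n:ℝ))^(k-1))⁻¹ := add_le_add e1 e2
      _ = 2 * L * (((n:ℝ))^(k-1))⁻¹ := by ring
  have hterm2 : ∀ i : ℕ, ‖((T (i+N) : ℝ) : ℂ)‖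
      ≤ (2 * L * (((N:ℝ))^(k-3))⁻¹) * ((((i+N:ℕ)):ℝ)^2)⁻¹ := by
    intro i
    have hm1 : 1 ≤ i + N := by omega
    have hmN : (N:ℝ) ≤ ((i+N:ℕ):ℝ) := by exact_mod_cast Nat.le_add_left N i
    have hN0 : (0:ℝ) < (N:ℝ) := by exact_mod_cast hN
    have hkey : (N:ℝ)^(k-3) * ((i+N:ℕ):ℝ)^2 ≤ ((i+N:ℕ):ℝ)^(k-1) := by
      have h1 : ((i+N:ℕ):ℝ)^(k-1) = ((i+N:ℕ):ℝ)^(k-3) * ((i+N:ℕ):ℝ)^2 := by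
        rw [← pow_add]; congr 1; omega
      rw [h1]
      exact mul_le_mul_of_nonneg_right (pow_le_pow_left₀ hN0.le hmN _) (by positivity)
    have hinv : ((((i+N:ℕ):ℝ))^(k-1))⁻¹ ≤ ((N:ℝ)^(k-3))⁻¹ * ((((i+N:ℕ):ℝ))^2)⁻¹ := by
      rw [← mul_inv]
      exact inv_anti₀ (by positivity) hkey
    calc ‖((T (i+N) : ℝ) : ℂ)‖ ≤ 2 * L * ((((i+N:ℕ):ℝ))^(k-1))⁻¹ := by
          have := hwb (i+N) hm1
          exact_mod_cast this
      _ ≤ 2 * L * (((N:ℝ)^(k-3))⁻¹ * ((((i+N:ℕ):ℝ))^2)⁻¹) :=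
          mul_le_mul_of_nonneg_left hinv (by positivity)
      _ = (2 * L * (((N:ℝ))^(k-3))⁻¹) * ((((i+N:ℕ)):ℝ)^2)⁻¹ := by ring
  have hN0 : (0:ℝ) < (N:ℝ) := by exact_mod_cast hN
  have hshift : Summable (fun i : ℕ => ((((i+N:ℕ)):ℝ)^2)⁻¹) := by
    exact_mod_cast (summable_nat_add_iff N).mpr (Real.summable_nat_pow_inv.mpr one_lt_two)
  have hbsum : Summable (fun i : ℕ => (2 * L * (((N:ℝ))^(k-3))⁻¹) * ((((i+N:ℕ)):ℝ)^2)⁻¹) :=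
    hshift.mul_left _
  have hnormsum : Summable (fun i : ℕ => ‖((T (i+N) : ℝ) : ℂ)‖) :=
    Summable.of_nonneg_of_le (fun i => norm_nonneg _) hterm2 hbsum
  have htail : ‖∑' i : ℕ, ((T (i+N) : ℝ) : ℂ)‖ ≤ 4 * L / (N:ℝ)^(k-2) := by
    calc ‖∑' i : ℕ, ((T (i+N) : ℝ) : ℂ)‖ ≤ ∑' i : ℕ, ‖((T (i+N) : ℝ) : ℂ)‖ :=
          norm_tsum_le_tsum_norm hnormsum
      _ ≤ ∑' i : ℕ, (2 * L * (((N:ℝ))^(k-3))⁻¹) * ((((i+N:ℕ)):ℝ)^2)⁻¹ :=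
          Summable.tsum_le_tsum hterm2 hnormsum hbsum
      _ = (2 * L * (((N:ℝ))^(k-3))⁻¹) * ∑' i : ℕ, ((((i+N:ℕ)):ℝ)^2)⁻¹ := tsum_mul_left
      _ ≤ (2 * L * (((N:ℝ))^(k-3))⁻¹) * (2 / N) :=
          mul_le_mul_of_nonneg_left (tail_sq hN) (by positivity)
      _ = 4 * L / (N:ℝ)^(k-2) := by
          have hpow : (N:ℝ)^(k-2) = (N:ℝ)^(k-3) * N := by rw [← pow_succ]; congr 1; omega
          rw [hpow]
          field_simp
          ring
  have hofS : ((∑ n ∈ Finset.range N, T n : ℝ) : ℂ) = ∑ n ∈ Finset.range N, ((T n : ℝ):ℂ) := by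
    push_cast
    rfl
  have hdiff : ((g s - ∑ n ∈ Finset.range N, T n : ℝ) : ℂ) = ∑' i : ℕ, ((T (i+N) : ℝ) : ℂ) := by
    rw [Complex.ofReal_sub, hofS]
    linear_combination (-1 : ℂ) * hsplit
  have hSsum : -(2 * Real.sqrt 2 * π) * ∑ n ∈ Finset.range N,
      (n:ℝ) * (Real.sqrt 2 * ∫ r in (s-1)..s, u r * Real.sin (2*π*(n:ℝ)*(s-r)))
      = ∑ n ∈ Finset.range N, T n := by
    rw [Finset.mul_sum]
    refine Finset.sum_congr rfl (fun n _ => ?_)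
    simp only [hT]
    ring
  rw [hSsum]
  have habs : |g s - ∑ n ∈ Finset.range N, T n|
      = ‖((g s - ∑ n ∈ Finset.range N, T n : ℝ) : ℂ)‖ := by
    rw [Complex.norm_real, Real.norm_eq_abs]
  rw [habs, hdiff]
  exact htail


lemma cont_window {h : ℝ → ℝ} (hc : Continuous h) :
    Continuous (fun s => ∫ r in (s-1)..s, h r) := by
  have hint : ∀ a b : ℝ, IntervalIntegrable h MeasureTheory.volume a b :=
    fun a b => hc.intervalIntegrable a b
  have hP : Continuous (fun x => ∫ r in (0:ℝ)..x, h r) :=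
    intervalIntegral.continuous_primitive hint 0
  have key : ∀ s : ℝ, ∫ r in (s-1)..s, h r
      = (∫ r in (0:ℝ)..s, h r) - ∫ r in (0:ℝ)..(s-1), h r := by
    intro s
    rw [intervalIntegral.integral_interval_sub_left (hint 0 s) (hint 0 (s-1))]
  rw [funext key]
  exact hP.sub (hP.comp (continuous_id.sub continuous_const))

lemma cont_f {u : ℝ → ℝ} (hc : Continuous u) (n : ℕ) :
    Continuous (fun s => ∫ r in (s-1)..s, u r * Real.sin (2*π*(n:ℝ)*(s-r))) := by
  have key : ∀ s : ℝ, ∫ r in (s-1)..s, u r * Real.sin (2*π*(n:ℝ)*(s-r))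
      = Real.sin (2*π*(n:ℝ)*s) * (∫ r in (s-1)..s, u r * Real.cos (2*π*(n:ℝ)*r))
        - Real.cos (2*π*(n:ℝ)*s) * (∫ r in (s-1)..s, u r * Real.sin (2*π*(n:ℝ)*r)) := by
    intro s
    rw [← intervalIntegral.integral_const_mul, ← intervalIntegral.integral_const_mul,
        ← intervalIntegral.integral_sub
          ((by fun_prop : Continuous fun r => Real.sin (2*π*(n:ℝ)*s) * (u r * Real.cos (2*π*(n:ℝ)*r))).intervalIntegrable _ _)
          ((by fun_prop : Continuous fun r => Real.cos (2*π*(n:ℝ)*s) * (u r * Real.sin (2*π*(n:ℝ)*r))).intervalIntegrable _ _)]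
    apply intervalIntegral.integral_congr
    intro r _
    simp only
    have harg : 2*π*(n:ℝ)*(s-r) = 2*π*(n:ℝ)*s - 2*π*(n:ℝ)*r := by ring
    rw [harg, Real.sin_sub]
    ring
  rw [funext key]
  apply Continuous.sub
  · exact (by fun_prop : Continuous fun s => Real.sin (2*π*(n:ℝ)*s)).mul
      (cont_window (hc.mul (by fun_prop)))
  · exact (by fun_prop : Continuous fun s => Real.cos (2*π*(n:ℝ)*s)).mul
      (cont_window (hc.mul (by fun_prop)))

/-- Corollary on the integrated approximation error: for every `k ≥ 3` there is a
constant `C > 0`, depending only on `k`, such that for all `t ≥ 0`, `L ≥ 0`, `N ≥ 1`,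
and every `k`-times continuously differentiable 1-periodic `u` with `|u^{(k)}| ≤ L`,
the integrated estimator `u_N(t) = ∫_0^t u̇_N(s) ds`, where
`u̇_N(s) = −2√2π Σ_{n=1}^{N−1} n·x_n^s(s)` and
`x_n^s(s) = √2 ∫_{s-1}^s u(r) sin(2πn(s-r)) dr`, satisfies
`|(u(t) − u(0)) − u_N(t)| ≤ C · L · t / N^{k−2}`. -/
theorem stmt_11 (k : ℕ) (hk : 3 ≤ k) :
    ∃ C : ℝ, 0 < C ∧
      ∀ t : ℝ, 0 ≤ t → ∀ L : ℝ, 0 ≤ L → ∀ N : ℕ, 1 ≤ N → ∀ u : ℝ → ℝ,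
        ContDiff ℝ k u → (∀ s : ℝ, u (s + 1) = u s) →
        (∀ s : ℝ, |iteratedDeriv k u s| ≤ L) →
        |(u t - u 0) -
            ∫ s in (0 : ℝ)..t,
              -(2 * Real.sqrt 2 * π) *
                ∑ n ∈ Finset.range N,
                  (n : ℝ) *
                    (Real.sqrt 2 * ∫ r in (s - 1)..s, u r * Real.sin (2 * π * n * (s - r)))| ≤
          C * L * t / (N : ℝ) ^ (k - 2) := by
  refine ⟨4, by norm_num, ?_⟩
  intro t ht L hL N hN u hu hper hb
  have hp : Function.Periodic u 1 := hper
  have hk1 : (1:ℕ) ≤ k := by omega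
  have hu1 : ContDiff ℝ 1 u := hu.of_le (by exact_mod_cast hk1)
  have hgc : Continuous (deriv u) := hu.continuous_deriv (by exact_mod_cast hk1)
  set f : ℝ → ℝ := fun s => -(2 * Real.sqrt 2 * π) *
      ∑ n ∈ Finset.range N, (n:ℝ) * (Real.sqrt 2 * ∫ r in (s-1)..s, u r * Real.sin (2*π*(n:ℝ)*(s-r)))
    with hf
  have hfc : Continuous f := by
    apply continuous_const.mul
    apply continuous_finset_sum
    intro n _
    exact continuous_const.mul (continuous_const.mul (cont_f hu.continuous n))
  have hfint : IntervalIntegrable f MeasureTheory.volume 0 t := hfc.intervalIntegrable 0 t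
  have hgint : IntervalIntegrable (deriv u) MeasureTheory.volume 0 t := hgc.intervalIntegrable 0 t
  have hftc : u t - u 0 = ∫ s in (0:ℝ)..t, deriv u s := by
    rw [intervalIntegral.integral_deriv_eq_sub
      (fun x _ => (hu1.differentiable one_ne_zero).differentiableAt) hgint]
  have hsub : (u t - u 0) - (∫ s in (0:ℝ)..t, f s) = ∫ s in (0:ℝ)..t, (deriv u s - f s) := by
    rw [hftc, intervalIntegral.integral_sub hgint hfint]
  have hbound : ∀ s ∈ Set.uIoc (0:ℝ) t, ‖deriv u s - f s‖ ≤ 4 * L / (N:ℝ)^(k-2) := by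
    intro s _
    rw [Real.norm_eq_abs]
    exact pointwise_bound hk hN hu hp hb s
  have := intervalIntegral.norm_integral_le_of_norm_le_const hbound
  rw [← hsub] at this
  rw [Real.norm_eq_abs] at this
  calc |(u t - u 0) - ∫ s in (0:ℝ)..t, f s| ≤ (4 * L / (N:ℝ)^(k-2)) * |t - 0| := this
    _ = 4 * L * t / (N:ℝ)^(k-2) := by
        rw [sub_zero, abs_of_nonneg ht]
        ring
end
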